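/- Under Assumptions A1 (continuity and compactness), A2 (strict dissipativity), A3 (terminal conditions) and A4 (terminal cost on orbit), the rotated stage cost and rotated terminal cost vanish on the optimal periodic orbit: ℓ̃(x,u) = 0 and Ṽ_f(x) = 0 for all (x,u) = Π*(i) with i ∈ {0,...,p*−1}. -/

import Mathlib

open Filter Topology

section EMPCDefs

variable {E F : Type*} [NormedAddCommGroup E] [NormedAddCommGroup F]

/-- State trajectory `x_u(k, x₀)` of the system `x⁺ = f(x, u)` under input sequence `u`. -/
def traj (f : E × F → E) (x : E) (u : ℕ → F) : ℕ → E
  | 0 => x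
  | k + 1 => f (traj f x u k, u k)

/-- `u ∈ U^N(x)`: input sequences of length `N` keeping the state in `X`. -/
def FeasN (f : E × F → E) (X : Set E) (U : Set F) (x : E) (N : ℕ) (u : ℕ → F) : Prop :=
  (∀ k < N, u k ∈ U) ∧ ∀ k ≤ N, traj f x u k ∈ X

/-- `u ∈ U^∞(x)`: infinite input sequences keeping the state in `X`. -/
def FeasInf (f : E × F → E) (X : Set E) (U : Set F) (x : E) (u : ℕ → F) : Prop :=
  (∀ k, u k ∈ U) ∧ ∀ k, traj f x u k ∈ X

/-- The feasible set `X_N` of the terminal-constrained problem. -/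
def XN (f : E × F → E) (X : Set E) (U : Set F) (Xf : Set E) (N : ℕ) : Set E :=
  {x | ∃ u : ℕ → F, FeasN f X U x N u ∧ traj f x u N ∈ Xf}

/-- The feasible set `X_∞`. -/
def XInf (f : E × F → E) (X : Set E) (U : Set F) : Set E :=
  {x | ∃ u : ℕ → F, FeasInf f X U x u}

/-- Distance `‖(x,u)‖_Π` of a state-input pair to a `p`-periodic orbit `Π = (i ↦ P i)`. -/
noncomputable def distOrbit (p : ℕ) (P : ℕ → E × F) (z : E × F) : ℝ :=
  ⨅ i : Fin p, ‖z - P ↑i‖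

/-- Distance `‖x‖_{Π_X}` of a state to the state part of a `p`-periodic orbit. -/
noncomputable def distOrbitX (p : ℕ) (PX : ℕ → E) (x : E) : ℝ :=
  ⨅ i : Fin p, ‖x - PX ↑i‖

/-- `Π = (Π_X, Π_U)` (given on `{0, …, p-1}`) is a feasible `p`-periodic orbit. -/
def FeasOrbit (f : E × F → E) (X : Set E) (U : Set F) (p : ℕ)
    (PX : ℕ → E) (PU : ℕ → F) : Prop :=
  (∀ i < p, PX i ∈ X) ∧ (∀ i < p, PU i ∈ U) ∧
    ∀ i < p, PX ((i + 1) % p) = f (PX i, PU i)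

/-- Average cost `ℓ_Π = (1/p) Σ_{i<p} ℓ(Π(i))` of a `p`-periodic orbit. -/
noncomputable def avgCost (ℓ : E × F → ℝ) (p : ℕ) (PX : ℕ → E) (PU : ℕ → F) : ℝ :=
  (1 / (p : ℝ)) * ∑ i ∈ Finset.range p, ℓ (PX i, PU i)

/-- Average `(1/p) Σ_{i<p} g(Π_X(i))` of a function over the state part of an orbit. -/
noncomputable def avgOrbit (g : E → ℝ) (p : ℕ) (PX : ℕ → E) : ℝ :=
  (1 / (p : ℝ)) * ∑ i ∈ Finset.range p, g (PX i)

/-- `Π*` is an optimal periodic orbit: it is feasible and its average cost is the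
infimum of the average costs over all feasible periodic orbits. -/
def IsOptimalOrbit (f : E × F → E) (X : Set E) (U : Set F) (ℓ : E × F → ℝ) (p : ℕ)
    (PX : ℕ → E) (PU : ℕ → F) : Prop :=
  FeasOrbit f X U p PX PU ∧
    ∀ q : ℕ, 0 < q → ∀ (QX : ℕ → E) (QU : ℕ → F),
      FeasOrbit f X U q QX QU → avgCost ℓ p PX PU ≤ avgCost ℓ q QX QU

/-- Accumulated stage cost `J^1_K(x, u)`. -/
noncomputable def J1 (f : E × F → E) (ℓ : E × F → ℝ) (x : E) (u : ℕ → F) (K : ℕ) : ℝ :=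
  ∑ k ∈ Finset.range K, ℓ (traj f x u k, u k)

/-- Finite-horizon cost functional `J_N(x, u)` with terminal cost `Vf`. -/
noncomputable def JN (f : E × F → E) (ℓ : E × F → ℝ) (Vf : E → ℝ) (x : E) (u : ℕ → F)
    (N : ℕ) : ℝ :=
  J1 f ℓ x u N + Vf (traj f x u N)

/-- Optimal value function `V_N(x)` of the terminal-constrained problem. -/
noncomputable def VN (f : E × F → E) (X : Set E) (U : Set F) (ℓ : E × F → ℝ) (Vf : E → ℝ)
    (Xf : Set E) (N : ℕ) (x : E) : ℝ :=
  sInf ((fun u => JN f ℓ Vf x u N) '' {u : ℕ → F | FeasN f X U x N u ∧ traj f x u N ∈ Xf})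

/-- Rotated stage cost `ℓ̃(x,u) = ℓ(x,u) - ℓ_{Π*} + λ(x) - λ(f(x,u))`. -/
def rotCost (f : E × F → E) (ℓ : E × F → ℝ) (lam : E → ℝ) (lp : ℝ) (z : E × F) : ℝ :=
  ℓ z - lp + lam z.1 - lam (f z)

/-- Finite-horizon Cesàro cost `J^ces_K(x,u) = Σ_{k<K} (1 - k/K) ℓ(x_u(k,x), u(k))`. -/
noncomputable def Jces (f : E × F → E) (ℓ : E × F → ℝ) (x : E) (u : ℕ → F) (K : ℕ) : ℝ :=
  ∑ k ∈ Finset.range K, (1 - (k : ℝ) / (K : ℝ)) * ℓ (traj f x u k, u k)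

/-- Infinite-horizon Cesàro cost `J^ces_∞(x,u) = limsup_K J^ces_K(x,u)`. -/
noncomputable def JcesInf (f : E × F → E) (ℓ : E × F → ℝ) (x : E) (u : ℕ → F) : ℝ :=
  limsup (fun K : ℕ => Jces f ℓ x u K) atTop

/-- Unconditioned infinite-horizon value `V^uc_∞(x)`. -/
noncomputable def VucInf (f : E × F → E) (X : Set E) (U : Set F) (ℓ : E × F → ℝ)
    (x : E) : ℝ :=
  sInf ((fun u => JcesInf f ℓ x u) '' {u : ℕ → F | FeasInf f X U x u})

/-- Closed-loop state trajectory `x_μ(k, x)` under a feedback law `μ`. -/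
def trajCl (f : E × F → E) (μ : E → F) (x : E) : ℕ → E
  | 0 => x
  | k + 1 => f (trajCl f μ x k, μ (trajCl f μ x k))

/-- Closed-loop finite-horizon Cesàro cost `J^cl_K(x, μ)`. -/
noncomputable def JclK (f : E × F → E) (ℓ : E × F → ℝ) (μ : E → F) (x : E) (K : ℕ) : ℝ :=
  ∑ k ∈ Finset.range K, (1 - (k : ℝ) / (K : ℝ)) * ℓ (trajCl f μ x k, μ (trajCl f μ x k))

/-- Closed-loop infinite-horizon Cesàro cost `J^cl_∞(x, μ)`. -/
noncomputable def JclInf (f : E × F → E) (ℓ : E × F → ℝ) (μ : E → F) (x : E) : ℝ :=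
  limsup (fun K : ℕ => JclK f ℓ μ x K) atTop

end EMPCDefs

/-- Class `K_∞` comparison functions `[0,∞) → [0,∞)`. -/
def IsKInf (α : ℝ → ℝ) : Prop :=
  ContinuousOn α (Set.Ici 0) ∧ StrictMonoOn α (Set.Ici 0) ∧ α 0 = 0 ∧
    Filter.Tendsto α Filter.atTop Filter.atTop

/-- Class `L` comparison functions `[0,∞) → [0,∞)`. -/
def IsClassL (σ : ℝ → ℝ) : Prop :=
  ContinuousOn σ (Set.Ici 0) ∧ AntitoneOn σ (Set.Ici 0) ∧ (∀ t, 0 ≤ t → 0 ≤ σ t) ∧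
    Filter.Tendsto σ Filter.atTop (nhds 0)


theorem stmt0
    (dn dm : ℕ)
    (X : Set (EuclideanSpace ℝ (Fin dn))) (U : Set (EuclideanSpace ℝ (Fin dm)))
    (f : EuclideanSpace ℝ (Fin dn) × EuclideanSpace ℝ (Fin dm) → EuclideanSpace ℝ (Fin dn))
    (ℓ : EuclideanSpace ℝ (Fin dn) × EuclideanSpace ℝ (Fin dm) → ℝ)
    (p : ℕ) (hp : 0 < p)
    (PX : ℕ → EuclideanSpace ℝ (Fin dn)) (PU : ℕ → EuclideanSpace ℝ (Fin dm))
    (hopt : IsOptimalOrbit f X U ℓ p PX PU)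
    -- A1 (continuity and compactness)
    (hcomp : IsCompact (X ×ˢ U))
    (hfc : ContinuousOn f (X ×ˢ U)) (hlc : ContinuousOn ℓ (X ×ˢ U))
    -- A2 (strict dissipativity)
    (lam : EuclideanSpace ℝ (Fin dn) → ℝ) (hlamc : ContinuousOn lam X)
    (αl : ℝ → ℝ) (hαl : IsKInf αl)
    (hdiss : ∀ x ∈ X, ∀ u ∈ U, f (x, u) ∈ X →
      αl (distOrbit p (fun i => (PX i, PU i)) (x, u)) ≤
        rotCost f ℓ lam (avgCost ℓ p PX PU) (x, u))
    -- A3 (terminal conditions)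
    (Xf : Set (EuclideanSpace ℝ (Fin dn))) (hXfc : IsCompact Xf) (hXfX : Xf ⊆ X)
    (hPXf : ∀ i < p, PX i ∈ Xf)
    (Vf : EuclideanSpace ℝ (Fin dn) → ℝ) (hVfc : ContinuousOn Vf Xf)
    (uf : EuclideanSpace ℝ (Fin dn) → EuclideanSpace ℝ (Fin dm))
    (hufU : ∀ x ∈ Xf, uf x ∈ U) (hufX : ∀ x ∈ Xf, f (x, uf x) ∈ X)
    (hufXf : ∀ x ∈ Xf, f (x, uf x) ∈ Xf)
    (hufD : ∀ x ∈ Xf, Vf (f (x, uf x)) + ℓ (x, uf x) - avgCost ℓ p PX PU ≤ Vf x)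
    -- A4 (terminal cost on the optimal orbit)
    (hA4 : ∀ i < p, Vf (PX i) = ℓ (PX i, PU i) - avgCost ℓ p PX PU + Vf (f (PX i, PU i))) :
    ∀ i < p,
      rotCost f ℓ lam (avgCost ℓ p PX PU) (PX i, PU i) = 0 ∧
        Vf (PX i) + lam (PX i) - avgOrbit Vf p PX - avgOrbit lam p PX = 0 := by

  classical
  set lp := avgCost ℓ p PX PU with hlp
  obtain ⟨⟨hXmem, hUmem, hstep⟩, -⟩ := hopt
  have hpne : (p : ℝ) ≠ 0 := Nat.cast_ne_zero.2 hp.ne'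
  -- distance to orbit vanishes at orbit points
  have hnd : ∀ i < p, distOrbit p (fun i => (PX i, PU i)) (PX i, PU i) = 0 := by
    intro i hi
    have : Nonempty (Fin p) := ⟨⟨i, hi⟩⟩
    refine le_antisymm ?_ (le_ciInf fun j => norm_nonneg _)
    have h := ciInf_le (f := fun j : Fin p => ‖(PX i, PU i) - ((fun k => (PX k, PU k)) (↑j))‖)
      (Finite.bddBelow_range _) ⟨i, hi⟩
    simpa [distOrbit] using h
  -- rotated cost nonnegative on the orbit
  have hnn : ∀ i < p, 0 ≤ rotCost f ℓ lam lp (PX i, PU i) := by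
    intro i hi
    have hfX : f (PX i, PU i) ∈ X := by
      rw [← hstep i hi]; exact hXmem _ (Nat.mod_lt _ hp)
    have h := hdiss (PX i) (hXmem i hi) (PU i) (hUmem i hi) hfX
    rwa [hnd i hi, hαl.2.2.1] at h
  -- cyclic shift preserves sums over the orbit
  have hshift : ∀ g : EuclideanSpace ℝ (Fin dn) → ℝ,
      ∑ i ∈ Finset.range p, g (PX ((i + 1) % p)) = ∑ i ∈ Finset.range p, g (PX i) := by
    intro g
    refine Finset.sum_nbij' (fun i => (i + 1) % p) (fun j => (j + (p - 1)) % p)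
      (fun a _ => Finset.mem_range.2 (Nat.mod_lt _ hp))
      (fun a _ => Finset.mem_range.2 (Nat.mod_lt _ hp)) ?_ ?_ ?_
    · intro a ha
      have ha' := Finset.mem_range.1 ha
      have h1 : (a + 1) % p + (p - 1) = ((a + 1) % p + (p - 1)) := rfl
      calc ((a + 1) % p + (p - 1)) % p = (a + 1 + (p - 1)) % p := Nat.mod_add_mod _ _ _
        _ = (a + p) % p := by congr 1; omega
        _ = a % p := Nat.add_mod_right a p
        _ = a := Nat.mod_eq_of_lt ha'
    · intro a ha
      have ha' := Finset.mem_range.1 ha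
      calc ((a + (p - 1)) % p + 1) % p = (a + (p - 1) + 1) % p := Nat.mod_add_mod _ _ _
        _ = (a + p) % p := by congr 1; omega
        _ = a % p := Nat.add_mod_right a p
        _ = a := Nat.mod_eq_of_lt ha'
    · intro a _; rfl
  -- sum of rotated costs over the orbit is zero
  have hsum : ∑ i ∈ Finset.range p, rotCost f ℓ lam lp (PX i, PU i) = 0 := by
    have hterm : ∀ i ∈ Finset.range p, rotCost f ℓ lam lp (PX i, PU i)
        = (ℓ (PX i, PU i) - lp) + (lam (PX i) - lam (PX ((i + 1) % p))) := by
      intro i hi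
      have := hstep i (Finset.mem_range.1 hi)
      simp [rotCost, ← this]
      ring
    rw [Finset.sum_congr rfl hterm, Finset.sum_add_distrib, Finset.sum_sub_distrib,
      Finset.sum_sub_distrib, hshift lam]
    have : ∑ _i ∈ Finset.range p, lp = (p : ℝ) * lp := by
      simp [mul_comm]
    rw [this, hlp, avgCost]
    field_simp
    simp
  -- each rotated cost is zero
  have hrot0 : ∀ i < p, rotCost f ℓ lam lp (PX i, PU i) = 0 := by
    intro i hi
    have := (Finset.sum_eq_zero_iff_of_nonneg
      (fun j hj => hnn j (Finset.mem_range.1 hj))).1 hsum i (Finset.mem_range.2 hi)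
    exact this
  -- Vf + lam is constant along the orbit
  have hgstep : ∀ i < p, Vf (PX i) + lam (PX i)
      = Vf (PX ((i + 1) % p)) + lam (PX ((i + 1) % p)) := by
    intro i hi
    have h4 := hA4 i hi
    rw [← hstep i hi] at h4
    have hr := hrot0 i hi
    rw [rotCost] at hr
    simp only at hr
    rw [← hstep i hi] at hr
    have : ℓ (PX i, PU i) - lp + lam (PX i) - lam (PX ((i + 1) % p)) = 0 := hr
    linarith
  have hg0 : ∀ i, i < p → Vf (PX i) + lam (PX i) = Vf (PX 0) + lam (PX 0) := by
    intro i
    induction i with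
    | zero => intro _; rfl
    | succ j ih =>
      intro hj
      have hjp : j < p := Nat.lt_of_succ_lt hj
      have h := hgstep j hjp
      rw [Nat.mod_eq_of_lt hj] at h
      rw [← h]; exact ih hjp
  have hsumg : ∑ i ∈ Finset.range p, (Vf (PX i) + lam (PX i))
      = (p : ℝ) * (Vf (PX 0) + lam (PX 0)) := by
    rw [Finset.sum_congr rfl (fun i hi => hg0 i (Finset.mem_range.1 hi))]
    simp only [Finset.sum_const, Finset.card_range, nsmul_eq_mul]
  have havg : avgOrbit Vf p PX + avgOrbit lam p PX = Vf (PX 0) + lam (PX 0) := by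
    rw [avgOrbit, avgOrbit, ← mul_add, ← Finset.sum_add_distrib, hsumg]
    field_simp
  intro i hi
  refine ⟨hrot0 i hi, ?_⟩
  have h1 := hg0 i hi
  linarith
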